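/- Fix i ≥ 0 and regard the sum bit s_i of an adder with incoming carry as the Boolean function of the 2i+3 variables c₋₁, a_0, b_0, a_1, b_1, …, a_i, b_i defined by s_i = a_i ⊕ b_i ⊕ c_{i-1}, where the carry bits satisfy c_l = (a_l ∧ b_l) ∨ (a_l ∧ c_{l-1}) ∨ (b_l ∧ c_{l-1}) for 0 ≤ l < i. Under the interleaved variable order c₋₁, a_0, b_0, a_1, b_1, …, a_i, b_i, the number of distinct non-constant prefix restrictions of s_i is at most 3·i + 7. -/

import Mathlib

/-- The prefix restriction of a Boolean function `f : (Fin n → Bool) → Bool`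
obtained by fixing the first `k` variables (w.r.t. the order `x_0, …, x_{n-1}`)
to the constants given by `ρ`, regarded again as a function
`(Fin n → Bool) → Bool` that ignores the fixed coordinates. -/
def prefixRestrict {n : ℕ} (f : (Fin n → Bool) → Bool) (k : ℕ) (ρ : Fin n → Bool) :
    (Fin n → Bool) → Bool :=
  fun x => f fun j => if (j : ℕ) < k then ρ j else x j

/-- The number of distinct non-constant prefix restrictions of
`f : (Fin n → Bool) → Bool` under the variable order `x_0, …, x_{n-1}`.
This equals the number of internal nodes of the reduced ordered BDD of `f`
under this variable order, and is taken as the definition of the BDD size. -/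
noncomputable def bddSize {n : ℕ} (f : (Fin n → Bool) → Bool) : ℕ :=
  Set.ncard {g : (Fin n → Bool) → Bool |
    (∃ k ≤ n, ∃ ρ : Fin n → Bool, g = prefixRestrict f k ρ) ∧ ¬∃ c, ∀ x, g x = c}

/-- The carry chain of an adder on the `2i+3` variables
`x 0 = c₋₁, x 1 = a_0, x 2 = b_0, …, x (2i+1) = a_i, x (2i+2) = b_i`:
`adderCarry i x 0 = c₋₁` and `adderCarry i x (l+1) = c_l` where
`c_l = (a_l ∧ b_l) ∨ (a_l ∧ c_{l-1}) ∨ (b_l ∧ c_{l-1})`. -/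
def adderCarry (i : ℕ) (x : Fin (2 * i + 3) → Bool) : ℕ → Bool
  | 0 => x ⟨0, by omega⟩
  | l + 1 =>
      if h : l ≤ i then
        (x ⟨2 * l + 1, by omega⟩ && x ⟨2 * l + 2, by omega⟩) ||
          (x ⟨2 * l + 1, by omega⟩ && adderCarry i x l) ||
          (x ⟨2 * l + 2, by omega⟩ && adderCarry i x l)
      else false

/-- The sum bit `s_i = a_i ⊕ b_i ⊕ c_{i-1}` of an adder with incoming carry,
regarded as a Boolean function of the `2i+3` variables
`c₋₁, a_0, b_0, a_1, b_1, …, a_i, b_i` (in this interleaved order). -/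
def sumBit (i : ℕ) (x : Fin (2 * i + 3) → Bool) : Bool :=
  xor (x ⟨2 * i + 1, by omega⟩) (xor (x ⟨2 * i + 2, by omega⟩) (adderCarry i x i))

/-- carry chain seeded with value c at level m -/
def seedCarry (i : ℕ) (x : Fin (2 * i + 3) → Bool) (m : ℕ) (c : Bool) : ℕ → Bool
  | 0 => c
  | l + 1 =>
      if l < m then c
      else if h : l ≤ i then
        (x ⟨2 * l + 1, by omega⟩ && x ⟨2 * l + 2, by omega⟩) ||
          (x ⟨2 * l + 1, by omega⟩ && seedCarry i x m c l) ||
          (x ⟨2 * l + 2, by omega⟩ && seedCarry i x m c l)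
      else false

lemma seed_le (i : ℕ) (x : Fin (2*i+3) → Bool) (m : ℕ) (c : Bool) (t : ℕ) (h : t ≤ m) :
    seedCarry i x m c t = c := by
  cases t with
  | zero => rfl
  | succ l => simp [seedCarry, Nat.lt_of_succ_le h]

lemma seed_zero (i : ℕ) (x : Fin (2*i+3) → Bool) (t : ℕ) :
    seedCarry i x 0 (x ⟨0, by omega⟩) t = adderCarry i x t := by
  induction t with
  | zero => rfl
  | succ l ih =>
    have ih' : seedCarry i x 0 (x 0) l = adderCarry i x l := ih
    simp [seedCarry, adderCarry, ih']

lemma seed_local (i m : ℕ) (c : Bool) (x y : Fin (2*i+3) → Bool) (t : ℕ)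
    (h : ∀ j : Fin (2*i+3), 2*m+1 ≤ (j:ℕ) → (j:ℕ) ≤ 2*t → x j = y j) :
    seedCarry i x m c t = seedCarry i y m c t := by
  induction t with
  | zero => rfl
  | succ l ih =>
    have ih' := ih (fun j h1 h2 => h j h1 (by omega))
    by_cases hlm : l < m
    · simp [seedCarry, hlm]
    · by_cases hli : l ≤ i
      · have hm : m ≤ l := by omega
        have e1 : x ⟨2*l+1, by omega⟩ = y ⟨2*l+1, by omega⟩ := h _ (by simp; omega) (by simp)
        have e2 : x ⟨2*l+2, by omega⟩ = y ⟨2*l+2, by omega⟩ := h _ (by simp; omega) (by simp; omega)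
        simp only [seedCarry, if_neg hlm, dif_pos hli, e1, e2, ih']
      · simp [seedCarry, hlm, hli]

lemma seed_restart (i m m' : ℕ) (c : Bool) (x : Fin (2*i+3) → Bool) (hmm : m ≤ m') (t : ℕ)
    (ht : m' ≤ t) :
    seedCarry i x m' (seedCarry i x m c m') t = seedCarry i x m c t := by
  induction t with
  | zero =>
    have : m' = 0 := by omega
    subst this; rfl
  | succ l ih =>
    by_cases hl : m' ≤ l
    · have ih' := ih hl
      have hlm' : ¬ l < m' := by omega
      have hlm : ¬ l < m := by omega
      by_cases hli : l ≤ i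
      · simp only [seedCarry, if_neg hlm, if_neg hlm', dif_pos hli, ih']
      · simp [seedCarry, hlm, hlm', hli]
    · have : m' = l + 1 := by omega
      subst this
      have : l < l + 1 := by omega
      simp [seedCarry, this]

def Gf (i m : ℕ) (c : Bool) : (Fin (2*i+3) → Bool) → Bool :=
  fun x => xor (x ⟨2*i+1, by omega⟩) (xor (x ⟨2*i+2, by omega⟩) (seedCarry i x m c i))

def Ff (i m : ℕ) : (Fin (2*i+3) → Bool) → Bool :=
  fun x => xor (x ⟨2*i+1, by omega⟩)
    (xor (x ⟨2*i+2, by omega⟩) (seedCarry i x m (x ⟨min (2*m) (2*i+2), by omega⟩) i))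

def Pf (i : ℕ) (b : Bool) : (Fin (2*i+3) → Bool) → Bool :=
  fun x => xor (x ⟨2*i+2, by omega⟩) b

def candList (i : ℕ) : List ((Fin (2*i+3) → Bool) → Bool) :=
  ((List.range (i+1)).map (fun m => Gf i m false)) ++
  ((List.range (i+1)).map (fun m => Gf i m true)) ++
  ((List.range (i+1)).map (Ff i)) ++ [Pf i false, Pf i true]

lemma candList_length (i : ℕ) : (candList i).length = 3*i+5 := by
  simp [candList]; omega

lemma adder_eq (i m : ℕ) (x y : Fin (2*i+3) → Bool)
    (h : ∀ j : Fin (2*i+3), (j:ℕ) ≤ 2*m → x j = y j) :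
    adderCarry i x m = adderCarry i y m := by
  rw [← seed_zero, ← seed_zero]
  rw [h ⟨0, by omega⟩ (by simp)]
  exact seed_local i 0 _ x y m (fun j h1 h2 => h j h2)

lemma mem_G (i m : ℕ) (hm : m ≤ i) (c : Bool) : Gf i m c ∈ candList i := by
  simp only [candList, List.mem_append, List.mem_map, List.mem_range]
  cases c
  · exact Or.inl (Or.inl (Or.inl ⟨m, by omega, rfl⟩))
  · exact Or.inl (Or.inl (Or.inr ⟨m, by omega, rfl⟩))

lemma mem_F (i m : ℕ) (hm : m ≤ i) : Ff i m ∈ candList i := by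
  simp only [candList, List.mem_append, List.mem_map, List.mem_range]
  exact Or.inl (Or.inr ⟨m, by omega, rfl⟩)

lemma mem_P (i : ℕ) (b : Bool) : Pf i b ∈ candList i := by
  simp only [candList, List.mem_append, List.mem_cons, List.mem_singleton]
  cases b
  · exact Or.inr (Or.inl rfl)
  · exact Or.inr (Or.inr (Or.inl rfl))

lemma restrict_top (i : ℕ) (ρ : Fin (2*i+3) → Bool) (x : Fin (2*i+3) → Bool) :
    prefixRestrict (sumBit i) (2*i+3) ρ x = sumBit i ρ := by
  show sumBit i (fun j => if (j:ℕ) < 2*i+3 then ρ j else x j) = sumBit i ρ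
  congr 1
  funext j
  exact if_pos j.isLt

lemma restrict_zero (i : ℕ) (ρ : Fin (2*i+3) → Bool) :
    prefixRestrict (sumBit i) 0 ρ = Ff i 0 := by
  funext x
  show sumBit i (fun j => if (j:ℕ) < 0 then ρ j else x j) = Ff i 0 x
  have hy : (fun j : Fin (2*i+3) => if (j:ℕ) < 0 then ρ j else x j) = x :=
    funext fun j => if_neg (by omega)
  rw [hy]
  have hfin : (⟨min (2*0) (2*i+2), by omega⟩ : Fin (2*i+3)) = ⟨0, by omega⟩ := by
    simp
  unfold sumBit Ff
  rw [hfin, ← seed_zero]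

lemma restrict_odd (i m : ℕ) (hm : m ≤ i) (ρ : Fin (2*i+3) → Bool) :
    prefixRestrict (sumBit i) (2*m+1) ρ = Gf i m (adderCarry i ρ m) := by
  funext x
  show sumBit i (fun j => if (j:ℕ) < 2*m+1 then ρ j else x j) = _
  set y := fun j : Fin (2*i+3) => if (j:ℕ) < 2*m+1 then ρ j else x j with hy
  have e1 : y ⟨2*i+1, by omega⟩ = x ⟨2*i+1, by omega⟩ := if_neg (by simp; omega)
  have e2 : y ⟨2*i+2, by omega⟩ = x ⟨2*i+2, by omega⟩ := if_neg (by simp; omega)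
  have e3 : adderCarry i y i = seedCarry i x m (adderCarry i ρ m) i := by
    rw [← seed_zero]
    rw [← seed_restart i 0 m (y ⟨0, by omega⟩) y (by omega) i hm]
    have e4 : seedCarry i y 0 (y ⟨0, by omega⟩) m = adderCarry i ρ m := by
      rw [seed_zero]
      exact adder_eq i m y ρ (fun j hj => if_pos (by omega))
    rw [e4]
    exact seed_local i m _ y x i (fun j h1 h2 => if_neg (by omega))
  unfold sumBit Gf
  rw [e1, e2, e3]

lemma restrict_even_top (i : ℕ) (ρ : Fin (2*i+3) → Bool) :
    prefixRestrict (sumBit i) (2*i+2) ρ =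
      Pf i (xor (ρ ⟨2*i+1, by omega⟩) (adderCarry i ρ i)) := by
  funext x
  show sumBit i (fun j => if (j:ℕ) < 2*i+2 then ρ j else x j) = _
  set y := fun j : Fin (2*i+3) => if (j:ℕ) < 2*i+2 then ρ j else x j with hy
  have e1 : y ⟨2*i+1, by omega⟩ = ρ ⟨2*i+1, by omega⟩ := if_pos (by simp)
  have e2 : y ⟨2*i+2, by omega⟩ = x ⟨2*i+2, by omega⟩ := if_neg (by simp)
  have e3 : adderCarry i y i = adderCarry i ρ i :=
    adder_eq i i y ρ (fun j hj => if_pos (by omega))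
  unfold sumBit Pf
  rw [e1, e2, e3]
  cases ρ ⟨2*i+1, by omega⟩ <;> cases x ⟨2*i+2, by omega⟩ <;>
    cases adderCarry i ρ i <;> rfl

lemma even_carry (i m : ℕ) (hm : m < i) (ρ x : Fin (2*i+3) → Bool) :
    adderCarry i (fun j : Fin (2*i+3) => if (j:ℕ) < 2*m+2 then ρ j else x j) (m+1) =
      ((ρ ⟨2*m+1, by omega⟩ && x ⟨2*m+2, by omega⟩) ||
       (ρ ⟨2*m+1, by omega⟩ && adderCarry i ρ m) ||
       (x ⟨2*m+2, by omega⟩ && adderCarry i ρ m)) := by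
  set y := fun j : Fin (2*i+3) => if (j:ℕ) < 2*m+2 then ρ j else x j with hy
  have e1 : y ⟨2*m+1, by omega⟩ = ρ ⟨2*m+1, by omega⟩ := if_pos (by simp)
  have e2 : y ⟨2*m+2, by omega⟩ = x ⟨2*m+2, by omega⟩ := if_neg (by simp)
  have e3 : adderCarry i y m = adderCarry i ρ m :=
    adder_eq i m y ρ (fun j hj => if_pos (by omega))
  have hmi : m ≤ i := by omega
  simp only [adderCarry, dif_pos hmi, e1, e2, e3]

lemma even_body (i m : ℕ) (hm : m < i) (ρ x : Fin (2*i+3) → Bool) :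
    sumBit i (fun j : Fin (2*i+3) => if (j:ℕ) < 2*m+2 then ρ j else x j) =
      xor (x ⟨2*i+1, by omega⟩) (xor (x ⟨2*i+2, by omega⟩)
        (seedCarry i x (m+1)
          (adderCarry i (fun j : Fin (2*i+3) => if (j:ℕ) < 2*m+2 then ρ j else x j) (m+1)) i)) := by
  set y := fun j : Fin (2*i+3) => if (j:ℕ) < 2*m+2 then ρ j else x j with hy
  have e1 : y ⟨2*i+1, by omega⟩ = x ⟨2*i+1, by omega⟩ := if_neg (by simp; omega)
  have e2 : y ⟨2*i+2, by omega⟩ = x ⟨2*i+2, by omega⟩ := if_neg (by simp; omega)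
  have e3 : adderCarry i y i = seedCarry i x (m+1) (adderCarry i y (m+1)) i := by
    rw [← seed_zero]
    rw [← seed_restart i 0 (m+1) (y ⟨0, by omega⟩) y (by omega) i (by omega)]
    rw [seed_zero]
    exact seed_local i (m+1) _ y x i (fun j h1 h2 => if_neg (by omega))
  unfold sumBit
  rw [e1, e2, e3]

lemma restrict_even_eq (i m : ℕ) (hm : m < i) (ρ : Fin (2*i+3) → Bool)
    (hac : ρ ⟨2*m+1, by omega⟩ = adderCarry i ρ m) :
    prefixRestrict (sumBit i) (2*m+2) ρ = Gf i (m+1) (adderCarry i ρ m) := by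
  funext x
  show sumBit i (fun j => if (j:ℕ) < 2*m+2 then ρ j else x j) = _
  rw [even_body i m hm ρ x, even_carry i m hm ρ x, hac]
  have : ((adderCarry i ρ m && x ⟨2*m+2, by omega⟩) ||
       (adderCarry i ρ m && adderCarry i ρ m) ||
       (x ⟨2*m+2, by omega⟩ && adderCarry i ρ m)) = adderCarry i ρ m := by
    cases adderCarry i ρ m <;> cases x ⟨2*m+2, by omega⟩ <;> rfl
  rw [this]
  rfl

lemma restrict_even_ne (i m : ℕ) (hm : m < i) (ρ : Fin (2*i+3) → Bool)
    (hac : ρ ⟨2*m+1, by omega⟩ ≠ adderCarry i ρ m) :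
    prefixRestrict (sumBit i) (2*m+2) ρ = Ff i (m+1) := by
  funext x
  show sumBit i (fun j => if (j:ℕ) < 2*m+2 then ρ j else x j) = _
  rw [even_body i m hm ρ x, even_carry i m hm ρ x]
  have : ((ρ ⟨2*m+1, by omega⟩ && x ⟨2*m+2, by omega⟩) ||
       (ρ ⟨2*m+1, by omega⟩ && adderCarry i ρ m) ||
       (x ⟨2*m+2, by omega⟩ && adderCarry i ρ m)) = x ⟨2*m+2, by omega⟩ := by
    revert hac
    cases ρ ⟨2*m+1, by omega⟩ <;> cases adderCarry i ρ m <;>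
      cases x ⟨2*m+2, by omega⟩ <;> simp
  rw [this]
  have hfin : (⟨min (2*(m+1)) (2*i+2), by omega⟩ : Fin (2*i+3)) = ⟨2*m+2, by omega⟩ := by
    have : min (2*(m+1)) (2*i+2) = 2*m+2 := by omega
    simp [this]
  unfold Ff
  rw [hfin]

lemma classify (i k : ℕ) (hk : k ≤ 2*i+3) (ρ : Fin (2*i+3) → Bool)
    (hnc : ¬∃ c, ∀ x, prefixRestrict (sumBit i) k ρ x = c) :
    prefixRestrict (sumBit i) k ρ ∈ candList i := by
  rcases Nat.lt_or_ge k (2*i+3) with hk' | hk'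
  · rcases Nat.even_or_odd k with ⟨m, hm⟩ | ⟨m, hm⟩
    · cases m with
      | zero =>
        have : k = 0 := by omega
        subst this
        rw [restrict_zero]
        exact mem_F i 0 (by omega)
      | succ m' =>
        have hkeq : k = 2*m'+2 := by omega
        subst hkeq
        rcases Nat.lt_or_ge m' i with hmi | hmi
        · by_cases hac : ρ ⟨2*m'+1, by omega⟩ = adderCarry i ρ m'
          · rw [restrict_even_eq i m' hmi ρ hac]
            exact mem_G i (m'+1) (by omega) _
          · rw [restrict_even_ne i m' hmi ρ hac]
            exact mem_F i (m'+1) (by omega)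
        · have heq : m' = i := by omega
          rw [heq, restrict_even_top]
          exact mem_P i _
    · have hmi : m ≤ i := by omega
      have hkeq : k = 2*m+1 := by omega
      subst hkeq
      rw [restrict_odd i m hmi]
      exact mem_G i m hmi _
  · have : k = 2*i+3 := by omega
    subst this
    exact absurd ⟨sumBit i ρ, restrict_top i ρ⟩ hnc

/-- **BDD size of the sum bit.** For every `i ≥ 0`, under the interleaved
variable order `c₋₁, a_0, b_0, …, a_i, b_i`, the number of distinct
non-constant prefix restrictions of the sum bit `s_i` (i.e. its BDD size)
is at most `3·i + 7`. -/
theorem sumBit_bddSize_le (i : ℕ) : bddSize (sumBit i) ≤ 3 * i + 7 := by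
  have hsub : {g : (Fin (2*i+3) → Bool) → Bool |
      (∃ k ≤ 2*i+3, ∃ ρ : Fin (2*i+3) → Bool, g = prefixRestrict (sumBit i) k ρ) ∧
        ¬∃ c, ∀ x, g x = c} ⊆ ↑(candList i).toFinset := by
    rintro g ⟨⟨k, hk, ρ, rfl⟩, hnc⟩
    simpa using classify i k hk ρ hnc
  calc bddSize (sumBit i) ≤ (candList i).toFinset.card := by
        rw [← Set.ncard_coe_finset]
        exact Set.ncard_le_ncard hsub (Finset.finite_toSet _)
    _ ≤ (candList i).length := (candList i).toFinset_card_le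
    _ = 3*i+5 := candList_length i
    _ ≤ 3*i+7 := by omega
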